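/- Let m ∈ ℕ^k with m_i ≥ 1 and Σ_{i=1}^k m_i = n. Let Z̃ be a symmetric positive semidefinite matrix of order n(k−1)+1 in block form with n×n blocks X_{ij} for i, j ∈ {1, …, k−1} (X_i := X_{ii}, X_{ji} = X_{ij}ᵀ) and last column (x_1; …; x_{k−1}; 1), satisfying: diag(X_i) = x_i and trace(X_i) = m_i and ⟨J_n, X_i⟩ = m_i² for i = 1, …, k−1; diag(X_{ij}) = 0 and ⟨J_n, X_{ij} + X_{ij}ᵀ⟩ = 2 m_i m_j for i ≠ j, i, j ≤ k−1. Define x_k := e_n − Σ_{i=1}^{k−1} x_i, X_{ik} := x_i e_nᵀ − X_i − Σ_{j≤k−1, j≠i} X_{ij} for i = 1, …, k−1, X_{ki} := X_{ik}ᵀ, and X_k := x_k e_nᵀ − Σ_{j=1}^{k−1} X_{kj}. Then the completed symmetric matrix Z of order nk+1, with blocks X_{ij} (i, j = 1, …, k) and last column (x_1; …; x_k; 1), is positive semidefinite and satisfies diag(X_i) = x_i and trace(X_i) = m_i and ⟨J_n, X_i⟩ = m_i² for all i = 1, …, k; diag(X_{ij}) = 0 for all i ≠ j; and ⟨J_n,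 X_{ij} + X_{ij}ᵀ⟩ = 2 m_i m_j for all i ≠ j. -/
import Mathlib


open Matrix Finset

noncomputable section

/-- The reduced SDP matrix `Z̃` of order `n(k-1)+1`, in block form with
`n × n` blocks `X i j` and last column `(x_1; …; x_{k-1}; 1)`. -/
def tildeZ (n k : ℕ)
    (X : Fin (k - 1) → Fin (k - 1) → Matrix (Fin n) (Fin n) ℝ)
    (x : Fin (k - 1) → Fin n → ℝ) :
    Matrix ((Fin (k - 1) × Fin n) ⊕ Unit) ((Fin (k - 1) × Fin n) ⊕ Unit) ℝ :=
  Matrix.of fun a b =>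
    match a, b with
    | Sum.inl (i, s), Sum.inl (j, t) => X i j s t
    | Sum.inl (i, s), Sum.inr _ => x i s
    | Sum.inr _, Sum.inl (j, t) => x j t
    | Sum.inr _, Sum.inr _ => (1 : ℝ)

/-- The completed vector `x_k := e_n − Σ_{i<k} x_i`. -/
def xlast (n k : ℕ) (x : Fin (k - 1) → Fin n → ℝ) : Fin n → ℝ :=
  fun s => 1 - ∑ i : Fin (k - 1), x i s

/-- The completed blocks
`X_{ik} := x_i e_nᵀ − X_i − Σ_{j<k, j≠i} X_{ij} = x_i e_nᵀ − Σ_{j<k} X_{ij}`. -/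
def Xik (n k : ℕ) (X : Fin (k - 1) → Fin (k - 1) → Matrix (Fin n) (Fin n) ℝ)
    (x : Fin (k - 1) → Fin n → ℝ) (i : Fin (k - 1)) : Matrix (Fin n) (Fin n) ℝ :=
  vecMulVec (x i) (fun _ => 1) - ∑ j : Fin (k - 1), X i j

/-- The completed corner block `X_k := x_k e_nᵀ − Σ_{j<k} X_{kj}`,
where `X_{kj} = X_{jk}ᵀ`. -/
def Xlast (n k : ℕ) (X : Fin (k - 1) → Fin (k - 1) → Matrix (Fin n) (Fin n) ℝ)
    (x : Fin (k - 1) → Fin n → ℝ) : Matrix (Fin n) (Fin n) ℝ :=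
  vecMulVec (xlast n k x) (fun _ => 1) - ∑ j : Fin (k - 1), (Xik n k X x j)ᵀ

/-- The full family of vectors `x_1, …, x_k` of the completed matrix. -/
def xfull (n k : ℕ) (x : Fin (k - 1) → Fin n → ℝ) : Fin k → Fin n → ℝ :=
  fun i => if h : (i : ℕ) < k - 1 then x ⟨i, h⟩ else xlast n k x

/-- The full family of blocks `X_{ij}`, `i, j = 1, …, k`, of the completed
matrix. -/
def Xfull (n k : ℕ) (X : Fin (k - 1) → Fin (k - 1) → Matrix (Fin n) (Fin n) ℝ)
    (x : Fin (k - 1) → Fin n → ℝ) : Fin k → Fin k → Matrix (Fin n) (Fin n) ℝ :=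
  fun i j =>
    if hi : (i : ℕ) < k - 1 then
      if hj : (j : ℕ) < k - 1 then X ⟨i, hi⟩ ⟨j, hj⟩ else Xik n k X x ⟨i, hi⟩
    else
      if hj : (j : ℕ) < k - 1 then (Xik n k X x ⟨j, hj⟩)ᵀ else Xlast n k X x

/-- The completed symmetric matrix `Z` of order `nk+1`, with blocks
`X_{ij}` (`i, j = 1, …, k`) and last column `(x_1; …; x_k; 1)`. -/
def completedZ (n k : ℕ)
    (X : Fin (k - 1) → Fin (k - 1) → Matrix (Fin n) (Fin n) ℝ)
    (x : Fin (k - 1) → Fin n → ℝ) :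
    Matrix ((Fin k × Fin n) ⊕ Unit) ((Fin k × Fin n) ⊕ Unit) ℝ :=
  Matrix.of fun a b =>
    match a, b with
    | Sum.inl (i, s), Sum.inl (j, t) => Xfull n k X x i j s t
    | Sum.inl (i, s), Sum.inr _ => xfull n k x i s
    | Sum.inr _, Sum.inl (j, t) => xfull n k x j t
    | Sum.inr _, Sum.inr _ => (1 : ℝ)

namespace CZaux
def Amat (n k : ℕ) : Matrix ((Fin (k - 1) × Fin n) ⊕ Unit) ((Fin k × Fin n) ⊕ Unit) ℝ :=
  Matrix.of fun c b =>
    match b with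
    | Sum.inl (j, t) =>
        if hj : (j : ℕ) < k - 1 then (if c = Sum.inl (⟨(j : ℕ), hj⟩, t) then 1 else 0)
        else
          (match c with
           | Sum.inl (_, t') => if t' = t then (-1 : ℝ) else 0
           | Sum.inr _ => 1)
    | Sum.inr _ => if c = Sum.inr () then 1 else 0

variable {n k : ℕ}

lemma mulA_lt {α : Type*} [Fintype α] (M : Matrix α ((Fin (k - 1) × Fin n) ⊕ Unit) ℝ)
    (c : α) (j : Fin k) (hj : (j : ℕ) < k - 1) (t : Fin n) :
    (M * Amat n k) c (Sum.inl (j, t)) = M c (Sum.inl (⟨(j : ℕ), hj⟩, t)) := by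
  simp [Matrix.mul_apply, Amat, dif_pos hj, mul_ite, mul_one, mul_zero]

lemma mulA_last {α : Type*} [Fintype α] (M : Matrix α ((Fin (k - 1) × Fin n) ⊕ Unit) ℝ)
    (c : α) (j : Fin k) (hj : ¬ (j : ℕ) < k - 1) (t : Fin n) :
    (M * Amat n k) c (Sum.inl (j, t)) =
      M c (Sum.inr ()) - ∑ j' : Fin (k - 1), M c (Sum.inl (j', t)) := by
  rw [Matrix.mul_apply, Fintype.sum_sum_type]
  simp only [Amat, Matrix.of_apply, dif_neg hj]
  simp [Fintype.sum_prod_type, mul_ite, mul_one, mul_zero, mul_neg, Finset.sum_ite_eq',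
    sub_eq_neg_add]

lemma mulA_inr {α : Type*} [Fintype α] (M : Matrix α ((Fin (k - 1) × Fin n) ⊕ Unit) ℝ)
    (c : α) (u : Unit) :
    (M * Amat n k) c (Sum.inr u) = M c (Sum.inr ()) := by
  simp [Matrix.mul_apply, Amat, mul_ite, mul_one, mul_zero]

lemma ATmul_lt {β : Type*} (M : Matrix ((Fin (k - 1) × Fin n) ⊕ Unit) β ℝ)
    (i : Fin k) (hi : (i : ℕ) < k - 1) (s : Fin n) (d : β) :
    ((Amat n k)ᵀ * M) (Sum.inl (i, s)) d = M (Sum.inl (⟨(i : ℕ), hi⟩, s)) d := by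
  simp [Matrix.mul_apply, Matrix.transpose_apply, Amat, dif_pos hi, ite_mul, one_mul, zero_mul]

lemma ATmul_last {β : Type*} (M : Matrix ((Fin (k - 1) × Fin n) ⊕ Unit) β ℝ)
    (i : Fin k) (hi : ¬ (i : ℕ) < k - 1) (s : Fin n) (d : β) :
    ((Amat n k)ᵀ * M) (Sum.inl (i, s)) d =
      M (Sum.inr ()) d - ∑ j' : Fin (k - 1), M (Sum.inl (j', s)) d := by
  rw [Matrix.mul_apply, Fintype.sum_sum_type]
  simp only [Matrix.transpose_apply, Amat, Matrix.of_apply, dif_neg hi]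
  simp [Fintype.sum_prod_type, ite_mul, one_mul, zero_mul, neg_mul, Finset.sum_ite_eq',
    sub_eq_neg_add]

lemma ATmul_inr {β : Type*} (M : Matrix ((Fin (k - 1) × Fin n) ⊕ Unit) β ℝ)
    (u : Unit) (d : β) :
    ((Amat n k)ᵀ * M) (Sum.inr u) d = M (Sum.inr ()) d := by
  simp [Matrix.mul_apply, Matrix.transpose_apply, Amat, ite_mul, one_mul, zero_mul]

lemma Xik_apply (X : Fin (k - 1) → Fin (k - 1) → Matrix (Fin n) (Fin n) ℝ)
    (x : Fin (k - 1) → Fin n → ℝ) (i : Fin (k - 1)) (s t : Fin n) :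
    Xik n k X x i s t = x i s - ∑ j : Fin (k - 1), X i j s t := by
  simp [Xik, Matrix.sub_apply, vecMulVec_apply, Matrix.sum_apply]

lemma Xlast_apply (X : Fin (k - 1) → Fin (k - 1) → Matrix (Fin n) (Fin n) ℝ)
    (x : Fin (k - 1) → Fin n → ℝ) (s t : Fin n) :
    Xlast n k X x s t = xlast n k x s - ∑ j : Fin (k - 1), Xik n k X x j t s := by
  simp [Xlast, Matrix.sub_apply, vecMulVec_apply, Matrix.sum_apply, Matrix.transpose_apply]

lemma completedZ_eq (X : Fin (k - 1) → Fin (k - 1) → Matrix (Fin n) (Fin n) ℝ)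
    (x : Fin (k - 1) → Fin n → ℝ)
    (hsym : ∀ (i j : Fin (k - 1)) (s t : Fin n), X j i t s = X i j s t) :
    completedZ n k X x = (Amat n k)ᵀ * tildeZ n k X x * Amat n k := by
  rw [Matrix.mul_assoc]
  ext a b
  rcases a with ⟨i, s⟩ | u
  · by_cases hi : (i : ℕ) < k - 1
    · rw [ATmul_lt _ _ hi]
      rcases b with ⟨j, t⟩ | v
      · by_cases hj : (j : ℕ) < k - 1
        · rw [mulA_lt _ _ _ hj]
          simp [completedZ, tildeZ, Xfull, dif_pos hi, dif_pos hj]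
        · rw [mulA_last _ _ _ hj]
          simp [completedZ, tildeZ, Xfull, dif_pos hi, dif_neg hj, Xik_apply]
      · rw [mulA_inr]
        simp [completedZ, tildeZ, xfull, dif_pos hi]
    · rw [ATmul_last _ _ hi]
      rcases b with ⟨j, t⟩ | v
      · by_cases hj : (j : ℕ) < k - 1
        · rw [mulA_lt _ _ _ hj]
          rw [Finset.sum_congr rfl (fun j' (_ : j' ∈ Finset.univ) =>
            mulA_lt (n := n) (k := k) (tildeZ n k X x) (Sum.inl (j', s)) j hj t)]
          simp only [completedZ, tildeZ, Matrix.of_apply, Xfull, dif_neg hi, dif_pos hj,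
            Matrix.transpose_apply, Xik_apply]
          rw [Finset.sum_congr rfl (fun j' _ => hsym ⟨(j:ℕ), hj⟩ j' t s)]
        · rw [mulA_last _ _ _ hj]
          rw [Finset.sum_congr rfl (fun j' (_ : j' ∈ Finset.univ) =>
            mulA_last (n := n) (k := k) (tildeZ n k X x) (Sum.inl (j', s)) j hj t)]
          simp only [Finset.sum_sub_distrib]
          simp only [completedZ, tildeZ, Matrix.of_apply, Xfull, dif_neg hi, dif_neg hj,
            Xlast_apply, Xik_apply, xlast, Finset.sum_sub_distrib]
          have h2 : ∑ j' : Fin (k-1), ∑ j'' : Fin (k-1), X j' j'' t s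
              = ∑ j' : Fin (k-1), ∑ j'' : Fin (k-1), X j' j'' s t := by
            rw [Finset.sum_comm]
            exact Finset.sum_congr rfl fun j' _ => Finset.sum_congr rfl fun j'' _ =>
              hsym j' j'' s t
          rw [h2]; ring
      · rw [mulA_inr]
        rw [Finset.sum_congr rfl (fun j' (_ : j' ∈ Finset.univ) =>
          mulA_inr (n := n) (k := k) (tildeZ n k X x) (Sum.inl (j', s)) v)]
        simp [completedZ, tildeZ, xfull, xlast, dif_neg hi]
  · rw [ATmul_inr]
    rcases b with ⟨j, t⟩ | v
    · by_cases hj : (j : ℕ) < k - 1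
      · rw [mulA_lt _ _ _ hj]
        simp [completedZ, tildeZ, xfull, dif_pos hj]
      · rw [mulA_last _ _ _ hj]
        simp [completedZ, tildeZ, xfull, xlast, dif_neg hj]
    · rw [mulA_inr]
      simp [completedZ, tildeZ]
end CZaux

/-- Lemma 3 of the paper: the completed matrix `Z` of order
`nk+1` is positive semidefinite and satisfies all the constraints of the
full lifted SDP model. -/
theorem completedZ_posSemidef_and_constraints
    (n k : ℕ) (m : ℕ → ℕ)
    (X : Fin (k - 1) → Fin (k - 1) → Matrix (Fin n) (Fin n) ℝ)
    (x : Fin (k - 1) → Fin n → ℝ)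
    (hm : ∀ i < k, 1 ≤ m i) (hsum : ∑ i ∈ Finset.range k, m i = n)
    (hpsd : (tildeZ n k X x).PosSemidef)
    (hdiag : ∀ (i : Fin (k - 1)) (s : Fin n), X i i s s = x i s)
    (htr : ∀ i : Fin (k - 1), ∑ s : Fin n, X i i s s = (m i : ℝ))
    (hJ : ∀ i : Fin (k - 1), ∑ s : Fin n, ∑ t : Fin n, X i i s t = (m i : ℝ) ^ 2)
    (hdiag2 : ∀ (i j : Fin (k - 1)), i ≠ j → ∀ s : Fin n, X i j s s = 0)
    (hJ2 : ∀ (i j : Fin (k - 1)), i ≠ j →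
      ∑ s : Fin n, ∑ t : Fin n, (X i j s t + X i j t s) = 2 * (m i : ℝ) * (m j : ℝ)) :
    (completedZ n k X x).PosSemidef ∧
    (∀ (i : Fin k) (s : Fin n), Xfull n k X x i i s s = xfull n k x i s) ∧
    (∀ i : Fin k, ∑ s : Fin n, Xfull n k X x i i s s = (m i : ℝ)) ∧
    (∀ i : Fin k, ∑ s : Fin n, ∑ t : Fin n, Xfull n k X x i i s t = (m i : ℝ) ^ 2) ∧
    (∀ (i j : Fin k), i ≠ j → ∀ s : Fin n, Xfull n k X x i j s s = 0) ∧
    (∀ (i j : Fin k), i ≠ j →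
      ∑ s : Fin n, ∑ t : Fin n, (Xfull n k X x i j s t + Xfull n k X x i j t s) =
        2 * (m i : ℝ) * (m j : ℝ)) := by
  classical
  -- symmetry of the reduced matrix
  have hsym : ∀ (i j : Fin (k - 1)) (s t : Fin n), X j i t s = X i j s t := by
    intro i j s t
    have h0 := hpsd.isHermitian.apply (Sum.inl (j, t)) (Sum.inl (i, s))
    simpa [tildeZ] using h0.symm
  -- positive semidefiniteness
  have hpos : (completedZ n k X x).PosSemidef := by
    rw [CZaux.completedZ_eq X x hsym]
    have h := hpsd.conjTranspose_mul_mul_same (CZaux.Amat n k)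
    have hA : (CZaux.Amat n k)ᴴ = (CZaux.Amat n k)ᵀ := by
      ext c b; simp [Matrix.conjTranspose_apply]
    rwa [hA] at h
  -- basic sums
  have hx : ∀ i : Fin (k - 1), ∑ s : Fin n, x i s = (m i : ℝ) := by
    intro i; rw [← htr i]; exact Finset.sum_congr rfl fun s _ => (hdiag i s).symm
  have hS : ∀ i j : Fin (k - 1),
      ∑ s : Fin n, ∑ t : Fin n, X i j s t = (m i : ℝ) * (m j : ℝ) := by
    intro i j
    by_cases h : i = j
    · subst h; rw [hJ]; ring
    · have h2 := hJ2 i j h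
      have h3 : ∑ s : Fin n, ∑ t : Fin n, X i j t s
          = ∑ s : Fin n, ∑ t : Fin n, X i j s t := Finset.sum_comm
      simp only [Finset.sum_add_distrib] at h2
      rw [h3] at h2; linarith
  have hXikdiag : ∀ (i : Fin (k - 1)) (s : Fin n), Xik n k X x i s s = 0 := by
    intro i s
    rw [CZaux.Xik_apply]
    rw [Finset.sum_eq_single i (fun b _ hb => hdiag2 i b (fun hh => hb hh.symm) s) (by simp)]
    rw [hdiag]; ring
  have hswap : ∀ (f : Fin (k - 1) → Fin n → Fin n → ℝ),
      ∑ s : Fin n, ∑ t : Fin n, ∑ j : Fin (k - 1), f j s t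
        = ∑ j : Fin (k - 1), ∑ s : Fin n, ∑ t : Fin n, f j s t := by
    intro f
    rw [show (∑ s : Fin n, ∑ t : Fin n, ∑ j : Fin (k - 1), f j s t)
        = ∑ s : Fin n, ∑ j : Fin (k - 1), ∑ t : Fin n, f j s t from
      Finset.sum_congr rfl fun s _ => Finset.sum_comm, Finset.sum_comm]
  have hXiksum : ∀ i : Fin (k - 1),
      ∑ s : Fin n, ∑ t : Fin n, Xik n k X x i s t
        = (m i : ℝ) * ((n : ℝ) - ∑ j : Fin (k - 1), (m j : ℝ)) := by
    intro i
    have hrow : ∀ s : Fin n, ∑ t : Fin n, Xik n k X x i s t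
        = (n : ℝ) * x i s - ∑ j : Fin (k - 1), ∑ t : Fin n, X i j s t := by
      intro s
      simp only [CZaux.Xik_apply, Finset.sum_sub_distrib]
      rw [Finset.sum_const, Finset.card_univ, Fintype.card_fin, nsmul_eq_mul, Finset.sum_comm]
    rw [Finset.sum_congr rfl fun s _ => hrow s]
    rw [Finset.sum_sub_distrib, ← Finset.mul_sum, hx, Finset.sum_comm]
    rw [Finset.sum_congr rfl (fun j (_ : j ∈ Finset.univ) => hS i j), ← Finset.mul_sum]
    ring
  have hXiksum' : ∀ i : Fin (k - 1),
      ∑ s : Fin n, ∑ t : Fin n, Xik n k X x i t s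
        = (m i : ℝ) * ((n : ℝ) - ∑ j : Fin (k - 1), (m j : ℝ)) :=
    fun i => (Finset.sum_comm).trans (hXiksum i)
  have hxlastsum : ∑ s : Fin n, xlast n k x s
      = (n : ℝ) - ∑ j : Fin (k - 1), (m j : ℝ) := by
    simp only [xlast, Finset.sum_sub_distrib, Finset.sum_const, Finset.card_univ,
      Fintype.card_fin, nsmul_eq_mul, mul_one]
    rw [Finset.sum_comm]
    rw [Finset.sum_congr rfl fun j (_ : j ∈ Finset.univ) => hx j]
  have hlastval : ∀ i : Fin k, ¬ (i : ℕ) < k - 1 →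
      (m i : ℝ) = (n : ℝ) - ∑ j : Fin (k - 1), (m j : ℝ) := by
    intro i hi
    have hik : (i : ℕ) = k - 1 := by have := i.isLt; omega
    have hk : 0 < k := i.pos
    have h1 : (∑ j ∈ Finset.range (k - 1), m j) + m (k - 1) = n := by
      have hkk : k - 1 + 1 = k := by omega
      rw [← Finset.sum_range_succ, hkk, hsum]
    have h2 : (∑ j : Fin (k - 1), (m j : ℝ)) = ∑ j ∈ Finset.range (k - 1), (m j : ℝ) :=
      Fin.sum_univ_eq_sum_range (fun j => (m j : ℝ)) (k - 1)
    have h4 : ((∑ j ∈ Finset.range (k - 1), m j : ℕ) : ℝ) + (m (k - 1) : ℝ) = (n : ℝ) := by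
      exact_mod_cast congrArg (Nat.cast : ℕ → ℝ) h1
    rw [hik, h2]
    push_cast at h4 ⊢
    linarith
  -- the five constraint families
  have c2 : ∀ (i : Fin k) (s : Fin n), Xfull n k X x i i s s = xfull n k x i s := by
    intro i s
    by_cases hi : (i : ℕ) < k - 1
    · simp only [Xfull, xfull, dif_pos hi]; exact hdiag _ s
    · simp only [Xfull, xfull, dif_neg hi]
      rw [CZaux.Xlast_apply, Finset.sum_congr rfl fun j _ => hXikdiag j s]
      simp
  have c3 : ∀ i : Fin k, ∑ s : Fin n, Xfull n k X x i i s s = (m i : ℝ) := by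
    intro i
    by_cases hi : (i : ℕ) < k - 1
    · simp only [Xfull, dif_pos hi]; exact htr _
    · simp only [Xfull, dif_neg hi]
      have hd : ∀ s : Fin n, Xlast n k X x s s = xlast n k x s := by
        intro s
        rw [CZaux.Xlast_apply, Finset.sum_congr rfl fun j _ => hXikdiag j s]
        simp
      rw [Finset.sum_congr rfl fun s (_ : s ∈ Finset.univ) => hd s, hxlastsum, hlastval i hi]
  have c4 : ∀ i : Fin k,
      ∑ s : Fin n, ∑ t : Fin n, Xfull n k X x i i s t = (m i : ℝ) ^ 2 := by
    intro i
    by_cases hi : (i : ℕ) < k - 1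
    · simp only [Xfull, dif_pos hi]; exact hJ _
    · simp only [Xfull, dif_neg hi]
      rw [Finset.sum_congr rfl fun s (_ : s ∈ Finset.univ) =>
        Finset.sum_congr rfl fun t (_ : t ∈ Finset.univ) => CZaux.Xlast_apply X x s t]
      simp only [Finset.sum_sub_distrib]
      have t1 : ∑ s : Fin n, ∑ t : Fin n, xlast n k x s
          = (n : ℝ) * ((n : ℝ) - ∑ j : Fin (k - 1), (m j : ℝ)) := by
        rw [Finset.sum_congr rfl fun s (_ : s ∈ Finset.univ) => by
          rw [Finset.sum_const, Finset.card_univ, Fintype.card_fin, nsmul_eq_mul]]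
        rw [← Finset.mul_sum, hxlastsum]
      have t2 : ∑ s : Fin n, ∑ t : Fin n, ∑ j : Fin (k - 1), Xik n k X x j t s
          = (∑ j : Fin (k - 1), (m j : ℝ)) * ((n : ℝ) - ∑ j : Fin (k - 1), (m j : ℝ)) := by
        rw [hswap fun j s t => Xik n k X x j t s]
        rw [Finset.sum_congr rfl fun j (_ : j ∈ Finset.univ) => hXiksum' j, ← Finset.sum_mul]
      rw [t1, t2, hlastval i hi]
      ring
  have c5 : ∀ (i j : Fin k), i ≠ j → ∀ s : Fin n, Xfull n k X x i j s s = 0 := by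
    intro i j hij s
    by_cases hi : (i : ℕ) < k - 1 <;> by_cases hj : (j : ℕ) < k - 1
    · simp only [Xfull, dif_pos hi, dif_pos hj]
      exact hdiag2 _ _ (fun hh => hij (Fin.ext (by simpa using congrArg Fin.val hh))) s
    · simp only [Xfull, dif_pos hi, dif_neg hj]; exact hXikdiag _ s
    · simp only [Xfull, dif_neg hi, dif_pos hj, Matrix.transpose_apply]; exact hXikdiag _ s
    · exact absurd (Fin.ext (by have := i.isLt; have := j.isLt; omega : (i : ℕ) = (j : ℕ))) hij
  have c6 : ∀ (i j : Fin k), i ≠ j →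
      ∑ s : Fin n, ∑ t : Fin n, (Xfull n k X x i j s t + Xfull n k X x i j t s) =
        2 * (m i : ℝ) * (m j : ℝ) := by
    intro i j hij
    by_cases hi : (i : ℕ) < k - 1 <;> by_cases hj : (j : ℕ) < k - 1
    · simp only [Xfull, dif_pos hi, dif_pos hj]
      exact hJ2 _ _ (fun hh => hij (Fin.ext (by simpa using congrArg Fin.val hh)))
    · simp only [Xfull, dif_pos hi, dif_neg hj, Finset.sum_add_distrib]
      rw [hXiksum ⟨(i : ℕ), hi⟩, hXiksum' ⟨(i : ℕ), hi⟩, hlastval j hj]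
      ring
    · simp only [Xfull, dif_neg hi, dif_pos hj, Matrix.transpose_apply,
        Finset.sum_add_distrib]
      rw [hXiksum ⟨(j : ℕ), hj⟩, hXiksum' ⟨(j : ℕ), hj⟩, hlastval i hi]
      ring
    · exact absurd (Fin.ext (by have := i.isLt; have := j.isLt; omega : (i : ℕ) = (j : ℕ))) hij
  exact ⟨hpos, c2, c3, c4, c5, c6⟩


end
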